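/- Fix $\rho > 0$, $\lambda_1 \ge 0$, $\lambda_2 \ge 0$, $K \ge 1$, and $a = (a_1, \dots, a_K) \in \mathbb{R}^K$. Define $s_k = S(a_k, \lambda_1/\rho) = \operatorname{sgn}(a_k)(|a_k| - \lambda_1/\rho)_+$. Then the unique minimizer over $z \in \mathbb{R}^K$ of $h(z) = \frac{\rho}{2}\sum_{k=1}^K (z_k - a_k)^2 + \lambda_1 \sum_{k=1}^K |z_k| + \lambda_2 \sqrt{\sum_{k=1}^K z_k^2}$ is given componentwise by $\hat z_k = s_k \Big(1 - \frac{\lambda_2}{\rho \sqrt{\sum_{j=1}^K s_j^2}}\Big)_+$ when $(s_1,\dots,s_K) \ne 0$, and $\hat z = 0$ otherwise. -/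

import Mathlib

-- soft-threshold subgradient property
lemma soft_prop (ρ lam1 : ℝ) (hρ : 0 < ρ) (hlam1 : 0 ≤ lam1) (a s : ℝ)
    (hs : s = Real.sign a * max (|a| - lam1 / ρ) 0) :
    |ρ * (a - s)| ≤ lam1 ∧ ρ * (a - s) * s = lam1 * |s| := by
  have hdiv : 0 ≤ lam1 / ρ := div_nonneg hlam1 hρ.le
  rcases lt_trichotomy a 0 with hneg | hzero | hpos
  · rw [Real.sign_of_neg hneg] at hs
    rcases le_or_gt (|a| - lam1 / ρ) 0 with h1 | h1
    · rw [max_eq_right h1] at hs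
      subst hs
      constructor
      · rw [abs_mul, abs_of_pos hρ, mul_comm]
        rw [abs_of_neg hneg] at h1
        calc |a - -1 * 0| * ρ = |a| * ρ := by ring_nf
          _ ≤ lam1 / ρ * ρ := by
              apply mul_le_mul_of_nonneg_right _ hρ.le
              rw [abs_of_neg hneg]; linarith
          _ = lam1 := by field_simp
      · simp
    · rw [max_eq_left h1.le] at hs
      rw [abs_of_neg hneg] at hs h1
      have hsneg : s < 0 := by nlinarith
      rw [abs_of_neg hsneg]
      constructor
      · have : ρ * (a - s) = -lam1 := by
          rw [hs]; field_simp; ring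
        rw [this, abs_neg, abs_of_nonneg hlam1]
      · have : ρ * (a - s) = -lam1 := by
          rw [hs]; field_simp; ring
        rw [this]; ring
  · subst hzero
    rw [Real.sign_zero, zero_mul] at hs
    subst hs
    simpa using hlam1
  · rw [Real.sign_of_pos hpos] at hs
    rcases le_or_gt (|a| - lam1 / ρ) 0 with h1 | h1
    · rw [max_eq_right h1] at hs
      subst hs
      constructor
      · rw [abs_of_pos hpos] at h1
        rw [mul_zero, sub_zero, abs_mul, abs_of_pos hρ, abs_of_pos hpos]
        calc ρ * a ≤ ρ * (lam1 / ρ) := by nlinarith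
          _ = lam1 := by field_simp
      · simp
  
    · rw [max_eq_left h1.le] at hs
      rw [abs_of_pos hpos] at hs h1
      have hspos : 0 < s := by nlinarith
      rw [abs_of_pos hspos]
      have : ρ * (a - s) = lam1 := by rw [hs]; field_simp; ring
      constructor
      · rw [this, abs_of_nonneg hlam1]
      · rw [this]

open Finset

theorem stmt_6 (ρ lam1 lam2 : ℝ) (hρ : 0 < ρ) (hlam1 : 0 ≤ lam1)
    (hlam2 : 0 ≤ lam2) (K : ℕ) (hK : 1 ≤ K) (a : Fin K → ℝ)
    (s : Fin K → ℝ)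
    (hs : ∀ k, s k = Real.sign (a k) * max (|a k| - lam1 / ρ) 0)
    (h : (Fin K → ℝ) → ℝ)
    (hh : ∀ z, h z = ρ / 2 * ∑ k, (z k - a k) ^ 2 +
      lam1 * ∑ k, |z k| + lam2 * Real.sqrt (∑ k, (z k) ^ 2)) :
    (s ≠ 0 →
      (∀ z, h (fun k => s k *
          max (1 - lam2 / (ρ * Real.sqrt (∑ j, (s j) ^ 2))) 0) ≤ h z) ∧
      (∀ z, h z = h (fun k => s k *
          max (1 - lam2 / (ρ * Real.sqrt (∑ j, (s j) ^ 2))) 0) →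
        z = fun k => s k *
          max (1 - lam2 / (ρ * Real.sqrt (∑ j, (s j) ^ 2))) 0)) ∧
    (s = 0 → (∀ z, h 0 ≤ h z) ∧ (∀ z, h z = h 0 → z = 0)) := by
  set n : ℝ := Real.sqrt (∑ j, (s j) ^ 2) with hn
  set c : ℝ := max (1 - lam2 / (ρ * n)) 0 with hc
  set zh : Fin K → ℝ := fun k => s k * c with hzh
  have hn0 : 0 ≤ n := Real.sqrt_nonneg _
  have hc0 : 0 ≤ c := le_max_right _ _
  have hc1 : c ≤ 1 := by
    apply max_le _ zero_le_one
    have : 0 ≤ lam2 / (ρ * n) := div_nonneg hlam2 (by positivity)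
    linarith
  have hsum : ∑ j, (s j) ^ 2 = n * n := (Real.mul_self_sqrt (by positivity)).symm
  -- key subgradient bounds on the block part
  have hWle : ρ * (1 - c) * n ≤ lam2 := by
    rcases eq_or_lt_of_le hn0 with hn' | hn'
    · rw [← hn']; simpa using hlam2
    · rcases le_or_gt (1 - lam2 / (ρ * n)) 0 with h1 | h1
      · rw [hc, max_eq_right h1]
        have h2 : 1 ≤ lam2 / (ρ * n) := by linarith
        have := (one_le_div (by positivity : (0:ℝ) < ρ * n)).mp h2
        linarith [this]
      · rw [hc, max_eq_left h1.le]
        have : ρ * (1 - (1 - lam2 / (ρ * n))) * n = lam2 := by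
          field_simp; ring
        linarith [this]
  have hWeq : ρ * (1 - c) * c * (n * n) = lam2 * (c * n) := by
    rcases eq_or_lt_of_le hn0 with hn' | hn'
    · rw [← hn']; ring
    · rcases le_or_gt (1 - lam2 / (ρ * n)) 0 with h1 | h1
      · rw [hc, max_eq_right h1]; ring
      · rw [hc, max_eq_left h1.le]
        field_simp; ring
  -- per-coordinate soft-threshold subgradient bounds
  have soft : ∀ k, |ρ * (a k - s k)| ≤ lam1 ∧ ρ * (a k - s k) * s k = lam1 * |s k| :=
    fun k => soft_prop ρ lam1 hρ hlam1 (a k) (s k) (hs k)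
  -- key inequality: strong convexity around zh
  have key : ∀ z, h zh + ρ / 2 * ∑ k, (z k - zh k) ^ 2 ≤ h z := by
    intro z
    rw [hh z, hh zh]
    have hV1 : ∑ k, ρ * (a k - s k) * z k ≤ lam1 * ∑ k, |z k| := by
      rw [Finset.mul_sum]
      refine Finset.sum_le_sum fun k _ => ?_
      calc ρ * (a k - s k) * z k ≤ |ρ * (a k - s k) * z k| := le_abs_self _
        _ = |ρ * (a k - s k)| * |z k| := abs_mul _ _
        _ ≤ lam1 * |z k| := mul_le_mul_of_nonneg_right (soft k).1 (abs_nonneg _)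
    have hV2 : ∑ k, ρ * (a k - s k) * zh k = lam1 * ∑ k, |zh k| := by
      rw [Finset.mul_sum]
      refine Finset.sum_congr rfl fun k _ => ?_
      have habs : |zh k| = |s k| * c := by
        simp only [hzh, abs_mul, abs_of_nonneg hc0]
      calc ρ * (a k - s k) * zh k = (ρ * (a k - s k) * s k) * c := by simp only [hzh]; ring
        _ = lam1 * |s k| * c := by rw [(soft k).2]
        _ = lam1 * |zh k| := by rw [habs]; ring
    have hWsum : Real.sqrt (∑ k, (ρ * (1 - c) * s k) ^ 2) = ρ * (1 - c) * n := by
      have e : ∑ k, (ρ * (1 - c) * s k) ^ 2 = (ρ * (1 - c) * n) ^ 2 := by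
        have : ∑ k, (ρ * (1 - c) * s k) ^ 2 = (ρ * (1 - c)) ^ 2 * ∑ k, (s k) ^ 2 := by
          rw [Finset.mul_sum]; exact Finset.sum_congr rfl fun k _ => by ring
        rw [this, hsum]; ring
      rw [e, Real.sqrt_sq (mul_nonneg (mul_nonneg hρ.le (by linarith)) hn0)]
    have hW1 : ∑ k, ρ * (1 - c) * s k * z k ≤ lam2 * Real.sqrt (∑ k, (z k) ^ 2) := by
      calc ∑ k, ρ * (1 - c) * s k * z k
          ≤ Real.sqrt (∑ k, (ρ * (1 - c) * s k) ^ 2) * Real.sqrt (∑ k, (z k) ^ 2) :=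
            Real.sum_mul_le_sqrt_mul_sqrt _ _ _
        _ = (ρ * (1 - c) * n) * Real.sqrt (∑ k, (z k) ^ 2) := by rw [hWsum]
        _ ≤ lam2 * Real.sqrt (∑ k, (z k) ^ 2) :=
            mul_le_mul_of_nonneg_right hWle (Real.sqrt_nonneg _)
    have hzhsum : Real.sqrt (∑ k, (zh k) ^ 2) = c * n := by
      have e : ∑ k, (zh k) ^ 2 = (c * n) ^ 2 := by
        have : ∑ k, (zh k) ^ 2 = c ^ 2 * ∑ k, (s k) ^ 2 := by
          rw [Finset.mul_sum]; exact Finset.sum_congr rfl fun k _ => by simp only [hzh]; ring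
        rw [this, hsum]; ring
      rw [e, Real.sqrt_sq (mul_nonneg hc0 hn0)]
    have hW2 : ∑ k, ρ * (1 - c) * s k * zh k = lam2 * Real.sqrt (∑ k, (zh k) ^ 2) := by
      have e : ∑ k, ρ * (1 - c) * s k * zh k = ρ * (1 - c) * c * (n * n) := by
        have : ∑ k, ρ * (1 - c) * s k * zh k = (ρ * (1 - c) * c) * ∑ k, (s k) ^ 2 := by
          rw [Finset.mul_sum]; exact Finset.sum_congr rfl fun k _ => by simp only [hzh]; ring
        rw [this, hsum]; try ring
      rw [e, hzhsum, hWeq]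
    -- quadratic expansion
    have e1 : ρ / 2 * ∑ k, (z k - a k) ^ 2 + ∑ k, ρ * (a k - s k) * z k + ∑ k, ρ * (1 - c) * s k * z k
        = ρ / 2 * ∑ k, (zh k - a k) ^ 2 + ρ / 2 * ∑ k, (z k - zh k) ^ 2
          + ∑ k, ρ * (a k - s k) * zh k + ∑ k, ρ * (1 - c) * s k * zh k := by
      rw [Finset.mul_sum, Finset.mul_sum, Finset.mul_sum,
        ← Finset.sum_add_distrib, ← Finset.sum_add_distrib,
        ← Finset.sum_add_distrib, ← Finset.sum_add_distrib, ← Finset.sum_add_distrib]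
      exact Finset.sum_congr rfl fun k _ => by simp only [hzh]; ring
    linarith [hV1, hV2, hW1, hW2, e1]
  -- conclusion
  have hmin : ∀ z, h zh ≤ h z := fun z => by
    have := key z
    have hpos : 0 ≤ ∑ k, (z k - zh k) ^ 2 := Finset.sum_nonneg fun k _ => sq_nonneg _
    nlinarith
  have huniq : ∀ z, h z = h zh → z = zh := by
    intro z hz
    have := key z
    have hpos : 0 ≤ ∑ k, (z k - zh k) ^ 2 := Finset.sum_nonneg fun k _ => sq_nonneg _
    have hzero : ∑ k, (z k - zh k) ^ 2 = 0 := by nlinarith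
    funext k
    have := (Finset.sum_eq_zero_iff_of_nonneg (fun k _ => sq_nonneg (z k - zh k))).mp hzero k
      (Finset.mem_univ k)
    have h2 : z k - zh k = 0 := by
      have := sq_eq_zero_iff.mp this
      exact this
    linarith
  constructor
  · intro _
    exact ⟨hmin, huniq⟩
  · intro hs0
    have hzh0 : zh = 0 := by
      funext k
      simp only [hzh, hs0, Pi.zero_apply, zero_mul]
    rw [← hzh0]
    exact ⟨hmin, huniq⟩
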